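/- Let X be a T₀ topological space and let x₁, ..., xₙ be n distinct points of X. Then there exists a continuous map μ : X → Rₙ, where Rₙ = {1, ..., n} carries the topology whose open sets are the initial segments {1, ..., i} for 0 ≤ i ≤ n, such that μ is injective on {x₁, ..., xₙ}. -/

import Mathlib

theorem stmt_13 {X : Type*} [TopologicalSpace X] [T0Space X] (n : ℕ) (hn : 1 ≤ n)
    (x : Fin n → X) (hx : Function.Injective x)
    (t : TopologicalSpace {k : ℕ // 1 ≤ k ∧ k ≤ n})
    (ht : ∀ V : Set {k : ℕ // 1 ≤ k ∧ k ≤ n},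
      t.IsOpen V ↔ ∃ i ≤ n, V = {y | y.1 ≤ i}) :
    ∃ μ : X → {k : ℕ // 1 ≤ k ∧ k ≤ n},
      @Continuous X _ _ t μ ∧ Set.InjOn μ (Set.range x) := by
  classical
  -- A partial order relation on `Fin n` via (reverse) specialization of the points
  set r : Fin n → Fin n → Prop := fun i j => x i ⤳ x j with hrdef
  have hr : IsPartialOrder (Fin n) r :=
    { refl := fun i => specializes_refl _
      trans := fun i j k h1 h2 => Specializes.trans h1 h2
      antisymm := fun i j h1 h2 => hx (Specializes.antisymm h1 h2).eq }
  obtain ⟨s, hs, hrs⟩ := extend_partialOrder r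
  haveI := hs
  haveI : DecidableRel s := Classical.decRel s
  set l : List (Fin n) := Finset.univ.sort s with hl
  have hlen : l.length = n := by
    rw [hl, Finset.length_sort, Finset.card_univ, Fintype.card_fin]
  set f : Fin n → Fin n := fun a => l.get (Fin.cast hlen.symm a) with hf
  have hfinj : Function.Injective f := by
    intro a b hab
    have hnd := Finset.sort_nodup Finset.univ s
    rw [List.nodup_iff_injective_get] at hnd
    have := hnd hab
    have h2 : (Fin.cast hlen.symm a).val = (Fin.cast hlen.symm b).val := congrArg Fin.val this
    exact Fin.ext h2
  have hfsurj : Function.Surjective f := Finite.surjective_of_injective hfinj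
  set y : Fin n → X := fun a => x (f a) with hy
  have hyinj : Function.Injective y := hx.comp hfinj
  -- key ordering property
  have key : ∀ a b : Fin n, y a ⤳ y b → a ≤ b := by
    intro a b hab
    by_contra hba
    push_neg at hba
    have h1 : s (f b) (f a) := (Finset.pairwise_sort Finset.univ s).rel_get_of_lt
      (show Fin.cast hlen.symm b < Fin.cast hlen.symm a from hba)
    have h2 : s (f a) (f b) := hrs _ _ hab
    have : f a = f b := antisymm h2 h1
    exact absurd (hfinj this) (ne_of_lt hba).symm
  -- nested closed sets
  set C : Fin n → Set X := fun k => ⋃ (j : Fin n), ⋃ (_ : k ≤ j), closure {y j} with hC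
  have hCclosed : ∀ k, IsClosed (C k) := by
    intro k
    apply isClosed_iUnion_of_finite
    intro j
    exact isClosed_iUnion_of_finite fun _ => isClosed_closure
  have hCanti : ∀ {k k' : Fin n}, k ≤ k' → C k' ⊆ C k := by
    intro k k' hkk' z hz
    simp only [hC, Set.mem_iUnion] at hz ⊢
    obtain ⟨j, hj, hzj⟩ := hz
    exact ⟨j, le_trans hkk' hj, hzj⟩
  have memC : ∀ (j k : Fin n), y j ∈ C k ↔ k ≤ j := by
    intro j k
    constructor
    · intro hz
      simp only [hC, Set.mem_iUnion] at hz
      obtain ⟨i, hi, hji⟩ := hz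
      have : y i ⤳ y j := specializes_iff_mem_closure.mpr hji
      exact le_trans hi (key i j this)
    · intro hkj
      simp only [hC, Set.mem_iUnion]
      exact ⟨j, hkj, subset_closure rfl⟩
  set g : X → ℕ := fun z => (Finset.univ.filter fun k => z ∈ C k).card with hg
  have hgle : ∀ z, g z ≤ n := by
    intro z
    calc (Finset.univ.filter fun k => z ∈ C k).card ≤ Finset.univ.card :=
          Finset.card_filter_le _ _
      _ = n := by rw [Finset.card_univ, Fintype.card_fin]
  have lower : ∀ (z : X) (k : Fin n), z ∈ C k ↔ k.1 < g z := by
    intro z k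
    constructor
    · intro hz
      have hsub : Finset.Iic k ⊆ Finset.univ.filter fun k' => z ∈ C k' := by
        intro k' hk'
        rw [Finset.mem_Iic] at hk'
        exact Finset.mem_filter.mpr ⟨Finset.mem_univ _, hCanti hk' hz⟩
      have := Finset.card_le_card hsub
      rw [Fin.card_Iic] at this
      exact this
    · intro hlt
      by_contra hz
      have hsub : (Finset.univ.filter fun k' => z ∈ C k') ⊆ Finset.Iio k := by
        intro k' hk'
        rw [Finset.mem_filter] at hk'
        rw [Finset.mem_Iio]
        by_contra hkk'
        push_neg at hkk'
        exact hz (hCanti hkk' hk'.2)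
      have := Finset.card_le_card hsub
      rw [Fin.card_Iio] at this
      have h2 : g z ≤ k.1 := this
      omega
  have gy : ∀ j : Fin n, g (y j) = j.1 + 1 := by
    intro j
    have : (Finset.univ.filter fun k => y j ∈ C k) = Finset.Iic j := by
      ext k
      simp [memC j k, Finset.mem_Iic]
    rw [hg]
    simp only [this, Fin.card_Iic]
  -- the map
  refine ⟨fun z => ⟨max 1 (g z), le_max_left _ _, max_le hn (hgle z)⟩, ?_, ?_⟩
  · rw [@continuous_def _ _ _ t]
    intro V hV
    obtain ⟨i, hi, rfl⟩ := (ht V).mp hV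
    rcases Nat.eq_zero_or_pos i with hi0 | hi1
    · convert isOpen_empty
      ext z
      simp only [Set.mem_preimage, Set.mem_setOf_eq, hi0]
      simp [Nat.lt_of_lt_of_le Nat.zero_lt_one (le_max_left 1 (g z))]
    rcases lt_or_ge i n with hin | hni
    · have : (fun z => (⟨max 1 (g z), le_max_left _ _, max_le hn (hgle z)⟩ :
          {k : ℕ // 1 ≤ k ∧ k ≤ n})) ⁻¹' {y | y.1 ≤ i} = (C ⟨i, hin⟩)ᶜ := by
        ext z
        simp only [Set.mem_preimage, Set.mem_setOf_eq, Set.mem_compl_iff,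
          lower z ⟨i, hin⟩]
        omega
      rw [this]
      exact (hCclosed _).isOpen_compl
    · convert isOpen_univ
      ext z
      simp only [Set.mem_preimage, Set.mem_setOf_eq, Set.mem_univ, iff_true]
      exact le_trans (max_le hn (hgle z)) hni
  · rintro a ⟨i, rfl⟩ b ⟨j, rfl⟩ heq
    obtain ⟨i', rfl⟩ := hfsurj i
    obtain ⟨j', rfl⟩ := hfsurj j
    have h1 : max 1 (g (y i')) = max 1 (g (y j')) := congrArg Subtype.val heq
    rw [gy i', gy j'] at h1
    have : i' = j' := by
      apply Fin.ext
      omega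
    rw [this]
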